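/- Let m, n be positive integers and let A ∈ ℝ^{(mn)×(mn)} be symmetric positive definite, with rows and columns indexed by pairs (i,j) with 1 ≤ i ≤ m, 1 ≤ j ≤ n. Let Q_L ∈ ℝ^{m×m} and Q_R ∈ ℝ^{n×n} be orthogonal, let G ∈ ℝ^{m×n}, and let p > 0. Define D ∈ ℝ^{m×n} by D_{i,j} = ((Q_R ⊗ Q_L)ᵀ A (Q_R ⊗ Q_L))_{(i,j),(i,j)}, and define the eigenvalue-corrected Shampoo update U = Q_L (D^{⊙(-p)} ⊙ (Q_Lᵀ G Q_R)) Q_Rᵀ. Then λ_max(A)^{-p} · ‖G‖_F ≤ ‖U‖_F ≤ λ_min(A)^{-p} · ‖G‖_F, where λ_min(A) and λ_max(A) are the smallest and largest eigenvalues of A. -/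

import Mathlib

open Matrix Finset Kronecker

/-- Frobenius norm of a real matrix: square root of the sum of squares of all entries. -/
noncomputable def frobeniusNorm' {m n : Type*} [Fintype m] [Fintype n]
    (M : Matrix m n ℝ) : ℝ :=
  Real.sqrt (∑ i, ∑ j, (M i j) ^ 2)

/-- Squared Frobenius norm as a trace. -/
lemma frobSq_eq_trace {m n : Type*} [Fintype m] [Fintype n] (M : Matrix m n ℝ) :
    ∑ i, ∑ j, (M i j) ^ 2 = (Mᵀ * M).trace := by
  simp [Matrix.trace, Matrix.mul_apply, Matrix.diag, sq]
  rw [Finset.sum_comm]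

lemma frobSq_mul_left {m n : Type*} [Fintype m] [Fintype n] [DecidableEq m]
    (P : Matrix m m ℝ) (hP : Pᵀ * P = 1) (M : Matrix m n ℝ) :
    ∑ i, ∑ j, ((P * M) i j) ^ 2 = ∑ i, ∑ j, (M i j) ^ 2 := by
  rw [frobSq_eq_trace, frobSq_eq_trace, Matrix.transpose_mul]
  rw [show Mᵀ * Pᵀ * (P * M) = Mᵀ * (Pᵀ * P) * M by simp only [Matrix.mul_assoc], hP, Matrix.mul_one]

lemma frobSq_mul_right {m n : Type*} [Fintype m] [Fintype n] [DecidableEq n]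
    (P : Matrix n n ℝ) (hP : P * Pᵀ = 1) (M : Matrix m n ℝ) :
    ∑ i, ∑ j, ((M * P) i j) ^ 2 = ∑ i, ∑ j, (M i j) ^ 2 := by
  rw [frobSq_eq_trace, frobSq_eq_trace, Matrix.transpose_mul]
  rw [show Pᵀ * Mᵀ * (M * P) = Pᵀ * (Mᵀ * M * P) by simp only [Matrix.mul_assoc],
    Matrix.trace_mul_comm, show Mᵀ * M * P * Pᵀ = Mᵀ * M * (P * Pᵀ) by noncomm_ring,
    hP, Matrix.mul_one]

/-- Quadratic form bounds via eigenvalues. -/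
lemma quad_form_bounds {N : Type*} [Fintype N] [DecidableEq N] [Nonempty N]
    (A : Matrix N N ℝ) (hA : A.IsHermitian) (x : N → ℝ) :
    (Finset.univ.inf' Finset.univ_nonempty hA.eigenvalues) * (x ⬝ᵥ x) ≤ x ⬝ᵥ A *ᵥ x ∧
      x ⬝ᵥ A *ᵥ x ≤ (Finset.univ.sup' Finset.univ_nonempty hA.eigenvalues) * (x ⬝ᵥ x) := by
  set C : Matrix N N ℝ := (hA.eigenvectorUnitary : Matrix N N ℝ) with hC
  set y : N → ℝ := star C *ᵥ x with hy
  have hCC : C * star C = 1 := by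
    exact (Matrix.mem_unitaryGroup_iff).mp hA.eigenvectorUnitary.2
  have hstarT : (star C)ᵀ = C := by
    ext i j
    simp [Matrix.star_eq_conjTranspose, Matrix.conjTranspose_apply]
  have hvm : ∀ w : N → ℝ, Matrix.vecMul w C = star C *ᵥ w := by
    intro w
    ext k
    simp [Matrix.vecMul, Matrix.mulVec, dotProduct, Matrix.star_eq_conjTranspose,
      Matrix.conjTranspose_apply, mul_comm]
  have hyy : y ⬝ᵥ y = x ⬝ᵥ x := by
    rw [hy, Matrix.dotProduct_mulVec, ← Matrix.mulVec_transpose, hstarT,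
      Matrix.mulVec_mulVec, hCC, Matrix.one_mulVec]
  have hquad : x ⬝ᵥ A *ᵥ x = ∑ k, hA.eigenvalues k * (y k) ^ 2 := by
    conv_lhs => rw [hA.spectral_theorem, Unitary.conjStarAlgAut_apply]
    rw [Matrix.star_eq_conjTranspose] at hy ⊢
    rw [← Matrix.mulVec_mulVec, ← Matrix.mulVec_mulVec, Matrix.dotProduct_mulVec, hvm, ← hy]
    rw [Matrix.star_eq_conjTranspose, ← hy]
    simp [Matrix.mulVec_diagonal, dotProduct, sq]
    exact Finset.sum_congr rfl fun k _ => by ring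
  have hynn : ∀ k, (0:ℝ) ≤ (y k) ^ 2 := fun k => sq_nonneg _
  constructor
  · rw [hquad, ← hyy]
    have : (Finset.univ.inf' Finset.univ_nonempty hA.eigenvalues) * (y ⬝ᵥ y)
        = ∑ k, (Finset.univ.inf' Finset.univ_nonempty hA.eigenvalues) * (y k) ^ 2 := by
      simp [dotProduct, Finset.mul_sum, sq]
    rw [this]
    refine Finset.sum_le_sum fun k _ => ?_
    exact mul_le_mul_of_nonneg_right (Finset.inf'_le _ (Finset.mem_univ k)) (hynn k)
  · rw [hquad, ← hyy]
    have : (Finset.univ.sup' Finset.univ_nonempty hA.eigenvalues) * (y ⬝ᵥ y)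
        = ∑ k, (Finset.univ.sup' Finset.univ_nonempty hA.eigenvalues) * (y k) ^ 2 := by
      simp [dotProduct, Finset.mul_sum, sq]
    rw [this]
    refine Finset.sum_le_sum fun k _ => ?_
    exact mul_le_mul_of_nonneg_right (Finset.le_sup' _ (Finset.mem_univ k)) (hynn k)

/-- Let `A ∈ ℝ^{(mn)×(mn)}` be symmetric positive definite (indexed by pairs
`(i,j)`), let `Q_L, Q_R` be orthogonal, `G ∈ ℝ^{m×n}`, `p > 0`.  With the eigenvalue correction
`D_{i,j} = ((Q_R ⊗ Q_L)ᵀ A (Q_R ⊗ Q_L))_{(i,j),(i,j)}` (note the paper's `Q_R ⊗ Q_L` is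
`QL ⊗ₖ QR` in Mathlib's pair-indexed convention) and the eigenvalue-corrected Shampoo update
`U = Q_L (D^{⊙(-p)} ⊙ (Q_Lᵀ G Q_R)) Q_Rᵀ`, one has
`λ_max(A)^{-p} ‖G‖_F ≤ ‖U‖_F ≤ λ_min(A)^{-p} ‖G‖_F`. -/
theorem stmt_4 (m n : ℕ) [NeZero m] [NeZero n]
    (A : Matrix (Fin m × Fin n) (Fin m × Fin n) ℝ) (hA : A.IsHermitian) (hApd : A.PosDef)
    (QL : Matrix (Fin m) (Fin m) ℝ) (QR : Matrix (Fin n) (Fin n) ℝ)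
    (hQL : QLᵀ * QL = 1) (hQR : QRᵀ * QR = 1)
    (G : Matrix (Fin m) (Fin n) ℝ) (p : ℝ) (hp : 0 < p)
    (D : Matrix (Fin m) (Fin n) ℝ)
    (hD : ∀ i j, D i j = ((QL ⊗ₖ QR)ᵀ * A * (QL ⊗ₖ QR)) (i, j) (i, j))
    (U : Matrix (Fin m) (Fin n) ℝ)
    (hU : U = QL * (Matrix.of fun i j => (D i j) ^ (-p) * ((QLᵀ * G * QR) i j)) * QRᵀ) :
    (Finset.univ.sup' Finset.univ_nonempty hA.eigenvalues) ^ (-p) * frobeniusNorm' G ≤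
        frobeniusNorm' U ∧
      frobeniusNorm' U ≤
        (Finset.univ.inf' Finset.univ_nonempty hA.eigenvalues) ^ (-p) * frobeniusNorm' G := by
  set lmin := Finset.univ.inf' Finset.univ_nonempty hA.eigenvalues with hlmin
  set lmax := Finset.univ.sup' Finset.univ_nonempty hA.eigenvalues with hlmax
  have hlmin_pos : 0 < lmin := by
    obtain ⟨k, -, hk⟩ := Finset.exists_mem_eq_inf' Finset.univ_nonempty hA.eigenvalues
    rw [hlmin, hk]
    exact hApd.eigenvalues_pos k
  have hmaxmin : lmin ≤ lmax := by
    obtain ⟨k, -, hk⟩ := Finset.exists_mem_eq_inf' Finset.univ_nonempty hA.eigenvalues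
    rw [hlmin, hk]
    exact Finset.le_sup' _ (Finset.mem_univ k)
  -- orthogonality of Kronecker product
  set Q := QL ⊗ₖ QR with hQ
  have hQQ : Qᵀ * Q = 1 := by
    rw [hQ, ← Matrix.kroneckerMap_transpose, ← Matrix.mul_kronecker_mul, hQL, hQR,
      Matrix.one_kronecker_one]
  -- D bounds
  have hDbound : ∀ i j, lmin ≤ D i j ∧ D i j ≤ lmax := by
    intro i j
    set x : Fin m × Fin n → ℝ := fun k => Q k (i, j) with hx
    have hxx : x ⬝ᵥ x = 1 := by
      have : (Qᵀ * Q) (i, j) (i, j) = 1 := by rw [hQQ]; simp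
      rw [← this]
      simp [Matrix.mul_apply, dotProduct, hx]
    have hDij : D i j = x ⬝ᵥ A *ᵥ x := by
      rw [hD i j]
      simp [Matrix.mul_apply, dotProduct, Matrix.mulVec, Finset.mul_sum, hx]
      rw [Finset.sum_comm]
      refine Finset.sum_congr rfl fun a _ => ?_
      rw [Finset.sum_mul]
      exact Finset.sum_congr rfl fun b _ => by ring
    have := quad_form_bounds A hA x
    rw [hxx, mul_one, mul_one] at this
    rw [hDij]
    exact this
  have hDpos : ∀ i j, 0 < D i j := fun i j => lt_of_lt_of_le hlmin_pos (hDbound i j).1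
  -- entrywise bounds on D^{-p}
  have hEbound : ∀ i j, lmax ^ (-p) ≤ (D i j) ^ (-p) ∧ (D i j) ^ (-p) ≤ lmin ^ (-p) := by
    intro i j
    exact ⟨Real.rpow_le_rpow_of_nonpos (hDpos i j) (hDbound i j).2 (neg_nonpos.mpr hp.le),
      Real.rpow_le_rpow_of_nonpos hlmin_pos (hDbound i j).1 (neg_nonpos.mpr hp.le)⟩
  have hEpos : ∀ i j, (0:ℝ) < (D i j) ^ (-p) := fun i j => Real.rpow_pos_of_pos (hDpos i j) _
  set H := QLᵀ * G * QR with hH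
  set E : Matrix (Fin m) (Fin n) ℝ :=
    Matrix.of (fun i j => (D i j) ^ (-p) * (H i j)) with hE
  have hQLQLT : QL * QLᵀ = 1 := mul_eq_one_comm.mp hQL
  have hQRQRT : QR * QRᵀ = 1 := mul_eq_one_comm.mp hQR
  -- Frobenius norm invariances
  have hUfrob : ∑ i, ∑ j, (U i j) ^ 2 = ∑ i, ∑ j, (E i j) ^ 2 := by
    rw [hU, Matrix.mul_assoc, frobSq_mul_left QL hQL]
    rw [frobSq_mul_right QRᵀ (by rwa [Matrix.transpose_transpose]) E]
  have hHfrob : ∑ i, ∑ j, (H i j) ^ 2 = ∑ i, ∑ j, (G i j) ^ 2 := by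
    rw [hH, Matrix.mul_assoc, frobSq_mul_left QLᵀ (by rwa [Matrix.transpose_transpose])]
    rw [frobSq_mul_right QR hQRQRT]
  -- main sum bounds
  have hlow : (lmax ^ (-p)) ^ 2 * (∑ i, ∑ j, (G i j) ^ 2) ≤ ∑ i, ∑ j, (E i j) ^ 2 := by
    rw [← hHfrob, Finset.mul_sum]
    refine Finset.sum_le_sum fun i _ => ?_
    rw [Finset.mul_sum]
    refine Finset.sum_le_sum fun j _ => ?_
    have h1 : (E i j) ^ 2 = ((D i j) ^ (-p)) ^ 2 * (H i j) ^ 2 := by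
      rw [hE]; simp [mul_pow]
    rw [h1]
    refine mul_le_mul_of_nonneg_right ?_ (sq_nonneg _)
    exact pow_le_pow_left₀ (Real.rpow_nonneg (le_trans hlmin_pos.le hmaxmin) _)
      (hEbound i j).1 2
  have hhigh : ∑ i, ∑ j, (E i j) ^ 2 ≤ (lmin ^ (-p)) ^ 2 * (∑ i, ∑ j, (G i j) ^ 2) := by
    rw [← hHfrob, Finset.mul_sum]
    refine Finset.sum_le_sum fun i _ => ?_
    rw [Finset.mul_sum]
    refine Finset.sum_le_sum fun j _ => ?_
    have h1 : (E i j) ^ 2 = ((D i j) ^ (-p)) ^ 2 * (H i j) ^ 2 := by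
      rw [hE]; simp [mul_pow]
    rw [h1]
    refine mul_le_mul_of_nonneg_right ?_ (sq_nonneg _)
    exact pow_le_pow_left₀ (hEpos i j).le (hEbound i j).2 2
  have hlmaxp : (0:ℝ) ≤ lmax ^ (-p) := Real.rpow_nonneg (le_trans hlmin_pos.le hmaxmin) _
  have hlminp : (0:ℝ) ≤ lmin ^ (-p) := Real.rpow_nonneg hlmin_pos.le _
  constructor
  · rw [frobeniusNorm', frobeniusNorm', hUfrob]
    calc lmax ^ (-p) * Real.sqrt (∑ i, ∑ j, (G i j) ^ 2)
        = Real.sqrt ((lmax ^ (-p)) ^ 2 * (∑ i, ∑ j, (G i j) ^ 2)) := by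
          rw [Real.sqrt_mul (sq_nonneg _), Real.sqrt_sq hlmaxp]
      _ ≤ Real.sqrt (∑ i, ∑ j, (E i j) ^ 2) := Real.sqrt_le_sqrt hlow
  · rw [frobeniusNorm', frobeniusNorm', hUfrob]
    calc Real.sqrt (∑ i, ∑ j, (E i j) ^ 2)
        ≤ Real.sqrt ((lmin ^ (-p)) ^ 2 * (∑ i, ∑ j, (G i j) ^ 2)) := Real.sqrt_le_sqrt hhigh
      _ = lmin ^ (-p) * Real.sqrt (∑ i, ∑ j, (G i j) ^ 2) := by
          rw [Real.sqrt_mul (sq_nonneg _), Real.sqrt_sq hlminp]
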